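/- arXiv:2411.15019 — 3 statements merged into one kernel-verified Lean document; each statement's English description precedes it below -/
import Mathlib

section
/- Let η and μ be two finite Borel measures on ℝ^d, with μ singular with respect to Lebesgue measure 𝓛^d. Then for 𝓛^d-almost every vector v ∈ ℝ^d, the measures η and (τ_v)_♯ μ are mutually singular, where τ_v(x) = x + v. -/
open MeasureTheory

theorem stmt_1 {d : ℕ} (η μ : Measure (EuclideanSpace ℝ (Fin d)))
    [IsFiniteMeasure η] [IsFiniteMeasure μ]
    (hsing : μ ⟂ₘ (volume : Measure (EuclideanSpace ℝ (Fin d)))) :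
    ∀ᵐ v ∂(volume : Measure (EuclideanSpace ℝ (Fin d))),
      η ⟂ₘ Measure.map (fun x => x + v) μ := by
  set E := EuclideanSpace ℝ (Fin d)
  obtain ⟨s, hs, hμs, hvs⟩ := hsing
  set T : Set E := sᶜ with hT
  have hTm : MeasurableSet T := hs.compl
  have hvolT : (volume : Measure E) T = 0 := hvs
  have hμTc : μ Tᶜ = 0 := by simpa [hT] using hμs
  set A : Set (E × E) := {p : E × E | p.2 - p.1 ∈ T} with hA
  have hAm : MeasurableSet A := hTm.preimage (by fun_prop)
  have hmeas : Measurable fun v : E => η (Prod.mk v ⁻¹' A) :=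
    measurable_measure_prodMk_left hAm
  have hprod : ((volume : Measure E).prod η) A = 0 := by
    rw [Measure.prod_apply_symm hAm]
    have : ∀ y : E, (volume : Measure E) ((fun x => (x, y)) ⁻¹' A) = 0 := by
      intro y
      have h1 : ((fun x : E => (x, y)) ⁻¹' A) = (fun v : E => y - v) ⁻¹' T := by
        ext x; simp [hA]
      rw [h1,
        (Measure.measurePreserving_sub_left (volume : Measure E) y).measure_preimage
          hTm.nullMeasurableSet]
      exact hvolT
    simp [this]
  have key : (fun v : E => η (Prod.mk v ⁻¹' A)) =ᵐ[(volume : Measure E)] 0 := by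
    rw [← lintegral_eq_zero_iff hmeas, ← Measure.prod_apply hAm]
    exact hprod
  filter_upwards [key] with v hv
  have hpre : Prod.mk v ⁻¹' A = (fun x : E => x - v) ⁻¹' T := by
    ext x; simp [hA]; exact Iff.rfl
  refine ⟨(fun x : E => x - v) ⁻¹' T, hTm.preimage (measurable_sub_const v),
    hpre ▸ hv, ?_⟩
  rw [Measure.map_apply (measurable_add_const v)
      ((hTm.preimage (measurable_sub_const v)).compl)]
  have : (fun x : E => x + v) ⁻¹' ((fun x : E => x - v) ⁻¹' T)ᶜ = Tᶜ := by
    ext x; simp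
  rw [this]
  exact hμTc
end

section
/- Let f : ℝ^d → ℝ be a bounded Lipschitz function and let (π_n) be a sequence of L-Lipschitz functions ℝ^d → ℝ converging pointwise to a function π. Let γ : [0,1] → ℝ^d be a Lipschitz curve. Then ∫_0^1 f(γ(t)) (π_n ∘ γ)'(t) dt → ∫_0^1 f(γ(t)) (π ∘ γ)'(t) dt. -/
open Filter intervalIntegral MeasureTheory

private lemma abs_deriv_le_of_lip {K : NNReal} {H : ℝ → ℝ} (hH : LipschitzWith K H)
    (t : ℝ) : |deriv H t| ≤ K := by
  by_cases h : DifferentiableAt ℝ H t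
  · have hs : Tendsto (slope H t) (nhdsWithin t {t}ᶜ) (nhds (deriv H t)) :=
      hasDerivAt_iff_tendsto_slope.1 h.hasDerivAt
    refine le_of_tendsto hs.abs ?_
    filter_upwards [self_mem_nhdsWithin] with x hx
    have hxne : (x : ℝ) ≠ t := hx
    have h1 : |H x - H t| ≤ (K : ℝ) * |x - t| := by
      have := hH.dist_le_mul x t
      simpa [Real.dist_eq] using this
    rw [slope_def_field, abs_div, div_le_iff₀ (abs_pos.2 (sub_ne_zero.2 hxne))]
    exact h1
  · simp [deriv_zero_of_not_differentiableAt h]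

private lemma lip_integral_deriv {K : NNReal} {H : ℝ → ℝ} (hH : LipschitzWith K H)
    {a b : ℝ} (hab : a ≤ b) : ∫ t in a..b, deriv H t = H b - H a := by
  set r : ℕ → ℝ := fun j => 1 / (j + 1) with hr
  have hrpos : ∀ j : ℕ, 0 < r j := fun j => by positivity
  have hr0 : Tendsto r atTop (nhds 0) := tendsto_one_div_add_atTop_nhds_zero_nat
  have hHc : Continuous H := hH.continuous
  have hHi : ∀ u v : ℝ, IntervalIntegrable H volume u v := fun u v => hHc.intervalIntegrable u v
  have hquot : ∀ j : ℕ, ∀ t : ℝ, |(H (t + r j) - H t) / r j| ≤ (K : ℝ) := by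
    intro j t
    have h1 : |H (t + r j) - H t| ≤ (K : ℝ) * r j := by
      have := hH.dist_le_mul (t + r j) t
      simpa [Real.dist_eq, abs_of_pos (hrpos j)] using this
    rw [abs_div, abs_of_pos (hrpos j), div_le_iff₀ (hrpos j)]
    exact h1
  have main : Tendsto (fun j : ℕ => ∫ t in Set.Ioc a b, (H (t + r j) - H t) / r j) atTop
      (nhds (∫ t in Set.Ioc a b, deriv H t)) := by
    refine tendsto_integral_of_dominated_convergence (fun _ => (K : ℝ)) ?_ ?_ ?_ ?_
    · intro j
      exact (((hHc.comp (continuous_id.add continuous_const)).sub hHc).div_const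
        (r j)).aestronglyMeasurable
    · exact integrable_const _
    · intro j
      exact Eventually.of_forall fun t => by
        rw [Real.norm_eq_abs]; exact hquot j t
    · have hae : ∀ᵐ t : ℝ, DifferentiableAt ℝ H t := hH.ae_differentiableAt_real
      refine ae_restrict_of_ae ?_
      filter_upwards [hae] with t ht
      have h1 : Tendsto (fun j : ℕ => t + r j) atTop (nhdsWithin t {t}ᶜ) := by
        refine tendsto_nhdsWithin_of_tendsto_nhds_of_eventually_within _ ?_ ?_
        · simpa using tendsto_const_nhds.add hr0
        · exact Eventually.of_forall fun j => by
            simp only [Set.mem_compl_iff, Set.mem_singleton_iff]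
            intro h
            exact absurd (by linarith : r j = 0) (ne_of_gt (hrpos j))
      have h2 := (hasDerivAt_iff_tendsto_slope.1 ht.hasDerivAt).comp h1
      have h3 : (fun j : ℕ => (H (t + r j) - H t) / r j) = (slope H t) ∘ fun j => t + r j := by
        funext j
        simp [slope_def_field, Function.comp]
      rw [h3]
      exact h2
  have calc1 : ∀ j : ℕ, (∫ t in a..b, (H (t + r j) - H t) / r j)
      = ((∫ t in b..(b + r j), H t) - ∫ t in a..(a + r j), H t) / r j := by
    intro j
    have h1 : (∫ t in a..b, (H (t + r j) - H t))
        = (∫ t in a..b, H (t + r j)) - ∫ t in a..b, H t :=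
      intervalIntegral.integral_sub
        ((hHc.comp (continuous_id.add continuous_const)).intervalIntegrable a b) (hHi a b)
    have h2 : (∫ t in a..b, H (t + r j)) = ∫ t in (a + r j)..(b + r j), H t :=
      intervalIntegral.integral_comp_add_right H (r j)
    have h3 : (∫ t in a..(a + r j), H t) + (∫ t in (a + r j)..(b + r j), H t)
        = ∫ t in a..(b + r j), H t :=
      intervalIntegral.integral_add_adjacent_intervals (hHi _ _) (hHi _ _)
    have h4 : (∫ t in a..b, H t) + (∫ t in b..(b + r j), H t) = ∫ t in a..(b + r j), H t :=
      intervalIntegral.integral_add_adjacent_intervals (hHi _ _) (hHi _ _)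
    rw [intervalIntegral.integral_div, h1, h2]
    have h5 : (∫ t in (a + r j)..(b + r j), H t) - (∫ t in a..b, H t)
        = (∫ t in b..(b + r j), H t) - ∫ t in a..(a + r j), H t := by linarith
    rw [h5]
  have calc2 : ∀ c : ℝ, Tendsto (fun j : ℕ => (∫ t in c..(c + r j), H t) / r j) atTop
      (nhds (H c)) := by
    intro c
    have hbd : ∀ j : ℕ, |(∫ t in c..(c + r j), H t) / r j - H c| ≤ (K : ℝ) * r j := by
      intro j
      have h0 : (∫ t in c..(c + r j), H t) / r j - H c
          = (∫ t in c..(c + r j), (H t - H c)) / r j := by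
        rw [intervalIntegral.integral_sub (hHi _ _) intervalIntegrable_const,
          intervalIntegral.integral_const]
        rw [sub_div]
        congr 1
        rw [smul_eq_mul, add_sub_cancel_left]
        field_simp
        exact (mul_div_cancel_right₀ _ (ne_of_gt (hrpos j))).symm
      rw [h0, abs_div, abs_of_pos (hrpos j), div_le_iff₀ (hrpos j)]
      have hle : c ≤ c + r j := by linarith [hrpos j]
      have hb : ∀ x ∈ Set.uIoc c (c + r j), ‖H x - H c‖ ≤ (K : ℝ) * r j := by
        intro x hx
        rw [Set.uIoc_of_le hle] at hx
        have h1 : |x - c| ≤ r j := by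
          rw [abs_of_pos (by linarith [hx.1] : (0:ℝ) < x - c)]
          linarith [hx.2]
        have h2 : |H x - H c| ≤ (K : ℝ) * |x - c| := by
          have := hH.dist_le_mul x c
          simpa [Real.dist_eq] using this
        rw [Real.norm_eq_abs]
        calc |H x - H c| ≤ (K : ℝ) * |x - c| := h2
          _ ≤ (K : ℝ) * r j := by
              exact mul_le_mul_of_nonneg_left h1 (NNReal.coe_nonneg K)
      have := intervalIntegral.norm_integral_le_of_norm_le_const hb
      rw [Real.norm_eq_abs] at this
      have hw : |c + r j - c| = r j := by
        rw [add_sub_cancel_left, abs_of_pos (hrpos j)]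
      rw [hw] at this
      calc |∫ t in c..(c + r j), (H t - H c)| ≤ (K : ℝ) * r j * r j := this
        _ = (K : ℝ) * r j * r j := rfl
    rw [tendsto_iff_dist_tendsto_zero]
    simp only [Real.dist_eq]
    have hKr : Tendsto (fun j : ℕ => (K : ℝ) * r j) atTop (nhds ((K : ℝ) * 0)) :=
      hr0.const_mul _
    rw [mul_zero] at hKr
    exact squeeze_zero (fun j => abs_nonneg _) hbd hKr
  have final : Tendsto (fun j : ℕ =>
      ((∫ t in b..(b + r j), H t) - ∫ t in a..(a + r j), H t) / r j) atTop
      (nhds (H b - H a)) := by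
    simp only [sub_div]
    exact (calc2 b).sub (calc2 a)
  have conv : Tendsto (fun j : ℕ =>
      ((∫ t in b..(b + r j), H t) - ∫ t in a..(a + r j), H t) / r j) atTop
      (nhds (∫ t in a..b, deriv H t)) := by
    rw [intervalIntegral.integral_of_le hab]
    have heq : (fun j : ℕ => ((∫ t in b..(b + r j), H t) - ∫ t in a..(a + r j), H t) / r j)
        = fun j : ℕ => ∫ t in Set.Ioc a b, (H (t + r j) - H t) / r j := by
      funext j
      rw [← intervalIntegral.integral_of_le hab, calc1 j]
    rw [heq]
    exact main
  exact tendsto_nhds_unique conv final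

private lemma II_mul {G u : ℝ → ℝ} (hG : Continuous G) (hu : Measurable u) {K : ℝ}
    (hub : ∀ t, |u t| ≤ K) (a b : ℝ) :
    IntervalIntegrable (fun t => G t * u t) MeasureTheory.volume a b := by
  obtain ⟨B, hB⟩ := (isCompact_uIcc (a := a) (b := b)).exists_bound_of_continuousOn
    hG.continuousOn
  rw [intervalIntegrable_iff]
  refine Integrable.mono' (g := fun _ => B * K) ?_
    ((hG.measurable.mul hu).aestronglyMeasurable) ?_
  · rw [Set.uIoc]
    exact integrableOn_const measure_Ioc_lt_top.ne
  filter_upwards [ae_restrict_mem measurableSet_uIoc] with t ht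
  have h1 : |G t| ≤ B := by
    simpa [Real.norm_eq_abs] using hB t (Set.uIoc_subset_uIcc ht)
  rw [Real.norm_eq_abs, abs_mul]
  exact mul_le_mul h1 (hub t) (abs_nonneg _) ((abs_nonneg _).trans h1)

theorem stmt_8 {d : ℕ} (f : EuclideanSpace ℝ (Fin d) → ℝ) (Kf : NNReal)
    (hflip : LipschitzWith Kf f) (C : ℝ) (hfb : ∀ x, |f x| ≤ C)
    (L : NNReal) (π : ℕ → EuclideanSpace ℝ (Fin d) → ℝ)
    (hπ : ∀ n, LipschitzWith L (π n))
    (πlim : EuclideanSpace ℝ (Fin d) → ℝ)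
    (hconv : ∀ x, Tendsto (fun n => π n x) atTop (nhds (πlim x)))
    (γ : ℝ → EuclideanSpace ℝ (Fin d)) (M : NNReal)
    (hγ : LipschitzOnWith M γ (Set.Icc 0 1)) :
    Tendsto (fun n => ∫ t in (0:ℝ)..1, f (γ t) * deriv (fun s => π n (γ s)) t)
      atTop (nhds (∫ t in (0:ℝ)..1, f (γ t) * deriv (fun s => πlim (γ s)) t)) := by
  classical
  have hπlim : LipschitzWith L πlim := by
    refine LipschitzWith.of_dist_le_mul fun x y => ?_
    exact le_of_tendsto ((hconv x).dist (hconv y))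
      (Eventually.of_forall fun n => (hπ n).dist_le_mul x y)
  have hhn : ∀ n, LipschitzOnWith (L * M) (fun s => π n (γ s)) (Set.Icc 0 1) := fun n =>
    (hπ n).comp_lipschitzOnWith hγ
  have hh : LipschitzOnWith (L * M) (fun s => πlim (γ s)) (Set.Icc 0 1) :=
    hπlim.comp_lipschitzOnWith hγ
  have hg : LipschitzOnWith (Kf * M) (fun s => f (γ s)) (Set.Icc 0 1) :=
    hflip.comp_lipschitzOnWith hγ
  obtain ⟨G, hGlip, hGeq⟩ := hg.extend_real
  choose Hn hHnlip hHneq using fun n => (hhn n).extend_real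
  obtain ⟨H, hHlip, hHeq⟩ := hh.extend_real
  set K : ℝ := ((L * M : NNReal) : ℝ) with hKdef
  set Kg : ℝ := ((Kf * M : NNReal) : ℝ) with hKgdef
  have hK0 : 0 ≤ K := NNReal.coe_nonneg _
  have hKg0 : 0 ≤ Kg := NNReal.coe_nonneg _
  have hbn : ∀ n t, |deriv (Hn n) t| ≤ K := fun n t => abs_deriv_le_of_lip (hHnlip n) t
  have hb : ∀ t, |deriv H t| ≤ K := fun t => abs_deriv_le_of_lip hHlip t
  have hGc : Continuous G := hGlip.continuous
  have hGL : ∀ x y : ℝ, |G x - G y| ≤ Kg * |x - y| := by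
    intro x y
    have := hGlip.dist_le_mul x y
    simpa [Real.dist_eq, hKgdef] using this
  -- rewrite the integrals in terms of the Lipschitz extensions
  have key : ∀ u U : ℝ → ℝ, Set.EqOn u U (Set.Icc 0 1) →
      (∫ t in (0:ℝ)..1, f (γ t) * deriv u t) = ∫ t in (0:ℝ)..1, G t * deriv U t := by
    intro u U hueq
    refine intervalIntegral.integral_congr_ae ?_
    have h1 : ∀ᵐ x : ℝ, x ≠ (1:ℝ) := by
      rw [MeasureTheory.ae_iff]
      have : {x : ℝ | ¬x ≠ 1} = {(1:ℝ)} := by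
        ext x; simp
      rw [this]
      exact Real.volume_singleton
    filter_upwards [h1] with x hx1 hx
    rw [Set.uIoc_of_le (by norm_num : (0:ℝ) ≤ 1)] at hx
    have hxo : x ∈ Set.Ioo (0:ℝ) 1 := ⟨hx.1, lt_of_le_of_ne hx.2 hx1⟩
    have hxc : x ∈ Set.Icc (0:ℝ) 1 := Set.Ioo_subset_Icc_self hxo
    have hd : deriv u x = deriv U x := by
      apply Filter.EventuallyEq.deriv_eq
      filter_upwards [Icc_mem_nhds hxo.1 hxo.2] with y hy
      exact hueq hy
    have hGx : f (γ x) = G x := hGeq hxc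
    rw [hd, hGx]
  have keyn : ∀ n, (∫ t in (0:ℝ)..1, f (γ t) * deriv (fun s => π n (γ s)) t)
      = ∫ t in (0:ℝ)..1, G t * deriv (Hn n) t := fun n => key _ _ (hHneq n)
  have keyl : (∫ t in (0:ℝ)..1, f (γ t) * deriv (fun s => πlim (γ s)) t)
      = ∫ t in (0:ℝ)..1, G t * deriv H t := key _ _ hHeq
  rw [keyl]
  simp only [keyn]
  -- the main convergence
  rw [Metric.tendsto_atTop]
  intro ε hε
  obtain ⟨m, hm⟩ := exists_nat_gt ((2 * Kg * K + 1) * 2 / ε)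
  have hrhs : (0:ℝ) < (2 * Kg * K + 1) * 2 / ε := by positivity
  have hmpos : (0:ℝ) < m := lt_trans hrhs hm
  set t : ℕ → ℝ := fun k => (k : ℝ) / m with htdef
  have hstep : ∀ k : ℕ, t (k + 1) - t k = 1 / m := by
    intro k
    rw [htdef]
    push_cast
    field_simp
    ring
  have hle : ∀ k : ℕ, t k ≤ t (k + 1) := by
    intro k
    have h1 : (0:ℝ) < 1 / m := by positivity
    linarith [hstep k]
  have htk : ∀ k : ℕ, k ≤ m → t k ∈ Set.Icc (0:ℝ) 1 := by
    intro k hk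
    constructor
    · positivity
    · rw [htdef, div_le_one hmpos]
      exact_mod_cast hk
  -- decomposition on each subinterval
  have piece : ∀ u : ℝ → ℝ, LipschitzWith (L * M) u → ∀ k : ℕ, k < m →
      |(∫ s in t k..t (k + 1), G s * deriv u s) - G (t k) * (u (t (k + 1)) - u (t k))|
        ≤ Kg * K / (m * m) := by
    intro u hu k _
    have hdm : Measurable (deriv u) := measurable_deriv u
    have hdb : ∀ s, |deriv u s| ≤ K := fun s => abs_deriv_le_of_lip hu s
    have hftc : (∫ s in t k..t (k + 1), deriv u s) = u (t (k + 1)) - u (t k) :=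
      lip_integral_deriv hu (hle k)
    have hint1 : IntervalIntegrable (fun s => G s * deriv u s) volume (t k) (t (k + 1)) :=
      II_mul hGc hdm hdb _ _
    have hint2 : IntervalIntegrable (fun s => G (t k) * deriv u s) volume (t k) (t (k + 1)) :=
      II_mul continuous_const hdm hdb _ _
    have hsplit : (∫ s in t k..t (k + 1), G s * deriv u s)
        - G (t k) * (u (t (k + 1)) - u (t k))
        = ∫ s in t k..t (k + 1), (G s - G (t k)) * deriv u s := by
      rw [← hftc, ← intervalIntegral.integral_const_mul,
        ← intervalIntegral.integral_sub hint1 hint2]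
      congr 1
      funext s
      ring
    rw [hsplit]
    have hbound : ∀ x ∈ Set.uIoc (t k) (t (k + 1)),
        ‖(G x - G (t k)) * deriv u x‖ ≤ Kg / m * K := by
      intro x hx
      rw [Set.uIoc_of_le (hle k)] at hx
      have h2 : |x - t k| ≤ 1 / m := by
        rw [abs_of_pos (by linarith [hx.1] : (0:ℝ) < x - t k)]
        linarith [hx.2, hstep k]
      have h1 : |G x - G (t k)| ≤ Kg / m := by
        calc |G x - G (t k)| ≤ Kg * |x - t k| := hGL x (t k)
          _ ≤ Kg * (1 / m) := mul_le_mul_of_nonneg_left h2 hKg0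
          _ = Kg / m := by ring
      rw [Real.norm_eq_abs, abs_mul]
      exact mul_le_mul h1 (hdb x) (abs_nonneg _) (by positivity)
    have hbd := intervalIntegral.norm_integral_le_of_norm_le_const hbound
    rw [Real.norm_eq_abs] at hbd
    have hw : |t (k + 1) - t k| = 1 / m := by
      rw [hstep k, abs_of_pos (by positivity : (0:ℝ) < 1 / m)]
    rw [hw] at hbd
    calc |∫ s in t k..t (k + 1), (G s - G (t k)) * deriv u s|
        ≤ Kg / m * K * (1 / m) := hbd
      _ = Kg * K / (m * m) := by field_simp
  -- sum over subintervals
  have sum_eq : ∀ u : ℝ → ℝ, LipschitzWith (L * M) u →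
      (∫ s in (0:ℝ)..1, G s * deriv u s)
        = ∑ k ∈ Finset.range m, ∫ s in t k..t (k + 1), G s * deriv u s := by
    intro u hu
    have h := intervalIntegral.sum_integral_adjacent_intervals (a := t) (n := m)
      (f := fun s => G s * deriv u s) (μ := volume)
      (fun k _ => II_mul hGc (measurable_deriv u) (fun s => abs_deriv_le_of_lip hu s) _ _)
    have h0 : t 0 = 0 := by simp [htdef]
    have h1 : t m = 1 := by
      rw [htdef]
      field_simp
    rw [h0, h1] at h
    exact h.symm
  set S : (ℝ → ℝ) → ℝ :=
    fun u => ∑ k ∈ Finset.range m, G (t k) * (u (t (k + 1)) - u (t k)) with hSdef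
  have approx : ∀ u : ℝ → ℝ, LipschitzWith (L * M) u →
      |(∫ s in (0:ℝ)..1, G s * deriv u s) - S u| ≤ Kg * K / m := by
    intro u hu
    rw [sum_eq u hu]
    simp only [hSdef]
    rw [← Finset.sum_sub_distrib]
    refine le_trans (Finset.abs_sum_le_sum_abs _ _) ?_
    refine le_trans (Finset.sum_le_sum fun k hk => piece u hu k (Finset.mem_range.1 hk)) ?_
    rw [Finset.sum_const, Finset.card_range, nsmul_eq_mul]
    apply le_of_eq
    have hm0 : (m:ℝ) ≠ 0 := ne_of_gt hmpos
    field_simp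
  have hSconv : Tendsto (fun n => S (Hn n)) atTop (nhds (S H)) := by
    refine tendsto_finset_sum _ fun k hk => ?_
    have hk' := Finset.mem_range.1 hk
    have h1 : ∀ j : ℕ, j ≤ m → Tendsto (fun n => Hn n (t j)) atTop (nhds (H (t j))) := by
      intro j hj
      have hmem : t j ∈ Set.Icc (0:ℝ) 1 := htk j hj
      have e1 : ∀ n, Hn n (t j) = π n (γ (t j)) := fun n => (hHneq n hmem).symm
      have e2 : H (t j) = πlim (γ (t j)) := (hHeq hmem).symm
      simp only [e1, e2]
      exact hconv _
    exact tendsto_const_nhds.mul ((h1 (k + 1) hk').sub (h1 k hk'.le))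
  have hε2 : 0 < ε / 2 := by linarith
  obtain ⟨N, hN⟩ := Metric.tendsto_atTop.1 hSconv (ε / 2) hε2
  refine ⟨N, fun n hn => ?_⟩
  have h1 := approx (Hn n) (hHnlip n)
  have h2 := approx H hHlip
  have h3 := hN n hn
  rw [Real.dist_eq] at h3 ⊢
  have hmε : (2 * Kg * K + 1) * 2 < (m:ℝ) * ε := by
    rw [div_lt_iff₀ hε] at hm
    exact hm
  have hmbound : Kg * K / m + Kg * K / m < ε / 2 := by
    rw [← add_div, div_lt_iff₀ hmpos]
    nlinarith
  have tri1 : |(∫ s in (0:ℝ)..1, G s * deriv (Hn n) s) - (∫ s in (0:ℝ)..1, G s * deriv H s)|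
      ≤ |(∫ s in (0:ℝ)..1, G s * deriv (Hn n) s) - S (Hn n)|
        + |S (Hn n) - (∫ s in (0:ℝ)..1, G s * deriv H s)| := abs_sub_le _ _ _
  have tri2 : |S (Hn n) - (∫ s in (0:ℝ)..1, G s * deriv H s)|
      ≤ |S (Hn n) - S H| + |S H - (∫ s in (0:ℝ)..1, G s * deriv H s)| := abs_sub_le _ _ _
  have h2' : |S H - (∫ s in (0:ℝ)..1, G s * deriv H s)| ≤ Kg * K / m := by
    rw [abs_sub_comm]; exact h2
  linarith
end

section
/- Let μ be a nonzero finite Borel measure on ℝ^d, singular with respect to Lebesgue measure. Then there exist arbitrarily small vectors v ∈ ℝ^d, v ≠ 0, such that ‖(τ_v)_♯ μ − μ‖_{TV} = 2 μ(ℝ^d). -/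
open MeasureTheory

theorem stmt_12 {d : ℕ} (μ : Measure (EuclideanSpace ℝ (Fin d))) [IsFiniteMeasure μ]
    (hμ : μ ≠ 0) (hsing : μ ⟂ₘ (volume : Measure (EuclideanSpace ℝ (Fin d)))) :
    ∀ ε > 0, ∃ v : EuclideanSpace ℝ (Fin d), v ≠ 0 ∧ ‖v‖ < ε ∧
      ((Measure.map (fun x => x + v) μ).toSignedMeasure - μ.toSignedMeasure).totalVariation
        Set.univ = 2 * μ Set.univ := by
  classical
  intro ε hε
  set E := EuclideanSpace ℝ (Fin d)
  obtain ⟨s, hsm, hμs, hvs⟩ := hsing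
  rcases Nat.eq_zero_or_pos d with hd | hd
  · -- d = 0 : contradiction with singularity
    exfalso
    subst hd
    haveI : Subsingleton E := by
      constructor; intro a b; ext i; exact absurd i.2 (Nat.not_lt_zero _)
    rcases s.eq_empty_or_nonempty with h | h
    · rw [h, Set.compl_empty] at hvs
      have : (0:ENNReal) < volume (Set.univ : Set E) :=
        IsOpen.measure_pos volume isOpen_univ ⟨0, trivial⟩
      rw [hvs] at this; exact lt_irrefl 0 this
    · have hs_univ : s = Set.univ := by
        obtain ⟨x, hx⟩ := h
        ext y; simp [Subsingleton.elim y x, hx]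
      rw [hs_univ] at hμs
      exact hμ (Measure.measure_univ_eq_zero.mp hμs)
  · haveI : Nontrivial E := by
      have : 0 < Module.finrank ℝ E := by
        simpa [E, finrank_euclideanSpace] using hd
      exact Module.nontrivial_of_finrank_pos (R := ℝ) this
    -- the bad set of translations is null
    set T : Set (E × E) := {p | p.2 + p.1 ∈ sᶜ} with hT
    have hTm : MeasurableSet T :=
      (measurable_snd.add measurable_fst) hsm.compl
    have hg : Measurable fun v : E => μ (Prod.mk v ⁻¹' T) :=
      measurable_measure_prodMk_left (ν := μ) hTm
    have hint : ∫⁻ v, μ (Prod.mk v ⁻¹' T) ∂(volume : Measure E) = 0 := by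
      rw [← Measure.prod_apply hTm, Measure.prod_apply_symm hTm]
      have : ∀ x : E, (volume : Measure E) ((fun v => (v, x)) ⁻¹' T) = 0 := by
        intro x
        have : ((fun v => (v, x)) ⁻¹' T) = (fun v => x + v) ⁻¹' sᶜ := rfl
        rw [this, measure_preimage_add]
        exact hvs
      simp [this]
    have hae : ∀ᵐ v ∂(volume : Measure E), μ (Prod.mk v ⁻¹' T) = 0 :=
      (lintegral_eq_zero_iff hg).mp hint
    -- find a good small nonzero v
    have hball : 0 < (volume : Measure E) (Metric.ball 0 ε) :=
      Metric.measure_ball_pos _ _ hε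
    have hbad : (volume : Measure E)
        ({v : E | ¬ μ (Prod.mk v ⁻¹' T) = 0} ∪ {0}) = 0 := by
      apply le_antisymm _ zero_le
      calc (volume : Measure E) ({v : E | ¬ μ (Prod.mk v ⁻¹' T) = 0} ∪ {0})
          ≤ (volume : Measure E) {v : E | ¬ μ (Prod.mk v ⁻¹' T) = 0}
            + (volume : Measure E) {0} := measure_union_le _ _
        _ = 0 := by
            rw [ae_iff.mp hae, measure_singleton]; simp
    have hdiff : 0 < (volume : Measure E)
        (Metric.ball 0 ε \ ({v : E | ¬ μ (Prod.mk v ⁻¹' T) = 0} ∪ {0})) := by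
      have := measure_diff_null (μ := (volume : Measure E))
        (s := Metric.ball 0 ε) hbad
      rw [this]; exact hball
    obtain ⟨v, hv_ball, hv_not⟩ := nonempty_of_measure_ne_zero hdiff.ne'
    push_neg at hv_not
    obtain ⟨hv_good, hv_ne⟩ : μ (Prod.mk v ⁻¹' T) = 0 ∧ v ≠ 0 := by
      constructor
      · by_contra h; exact hv_not (Or.inl h)
      · intro h; exact hv_not (Or.inr h)
    refine ⟨v, hv_ne, by simpa using hv_ball, ?_⟩
    -- now compute the total variation
    set ν : Measure E := Measure.map (fun x => x + v) μ with hν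
    have hmeas : Measurable fun x : E => x + v := measurable_add_const v
    have hνs : ν sᶜ = 0 := by
      rw [hν, Measure.map_apply hmeas hsm.compl]
      exact hv_good
    have hNS : ν ⟂ₘ μ := ⟨sᶜ, hsm.compl, hνs, by rwa [compl_compl]⟩
    haveI : IsFiniteMeasure ν := by
      rw [hν]; infer_instance
    set j : JordanDecomposition E :=
      { posPart := ν, negPart := μ, mutuallySingular := hNS } with hj
    have hjs : j.toSignedMeasure = ν.toSignedMeasure - μ.toSignedMeasure := rfl
    have hJD : (ν.toSignedMeasure - μ.toSignedMeasure).toJordanDecomposition = j := by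
      rw [← hjs, JordanDecomposition.toJordanDecomposition_toSignedMeasure]
    have hTV : (ν.toSignedMeasure - μ.toSignedMeasure).totalVariation
        = ν + μ := by
      rw [SignedMeasure.totalVariation, hJD]
    have hνuniv : ν Set.univ = μ Set.univ := by
      rw [hν, Measure.map_apply hmeas MeasurableSet.univ, Set.preimage_univ]
    rw [hTV]
    simp only [Measure.add_apply, hνuniv, two_mul]
end
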